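/- Let X be a Banach function space on 𝕋 such that the backward shift Toeplitz operator T(e_{-1}) on H[X] has essential norm equal to 1. Then for every symbol of the form a = e_{-n} h with n ≥ 1 and h ∈ H^∞, the Toeplitz operator T(a) : H[X] → H[X] satisfies ‖T(a)‖_e ≤ ‖a‖_{L^∞}. -/

import Mathlib

open Complex Real Filter

noncomputable section

abbrev UC := AddCircle (2 * Real.pi)

instance : Fact (0 < 2 * Real.pi) := ⟨by positivity⟩

abbrev mUC : MeasureTheory.Measure UC := AddCircle.haarAddCircle

lemma norm_fourier_eq_one (n : ℤ) (t : UC) : ‖(fourier n t : ℂ)‖ = 1 :=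
  Circle.norm_coe _

lemma fourierCoeff_congr_ae' {f g : UC → ℂ} (h : f =ᵐ[mUC] g) (n : ℤ) :
    fourierCoeff f n = fourierCoeff g n := by
  unfold fourierCoeff
  exact MeasureTheory.integral_congr_ae (h.mono fun t ht => by simp only [ht])

lemma integrable_fourier_smul {f : UC → ℂ} (hf : MeasureTheory.Integrable f mUC) (n : ℤ) :
    MeasureTheory.Integrable (fun t => fourier n t • f t) mUC := by
  have : (fun t => fourier n t • f t) = fun t => (fourier n t : ℂ) * f t := rfl
  rw [this]
  exact hf.bdd_mul ((fourier n).continuous.aestronglyMeasurable)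
    (Filter.Eventually.of_forall fun t => (norm_fourier_eq_one n t).le)

lemma fourierCoeff_add {f g : UC → ℂ} (hf : MeasureTheory.Integrable f mUC)
    (hg : MeasureTheory.Integrable g mUC) (n : ℤ) :
    fourierCoeff (fun t => f t + g t) n = fourierCoeff f n + fourierCoeff g n := by
  unfold fourierCoeff
  simp_rw [smul_add]
  exact MeasureTheory.integral_add (integrable_fourier_smul hf _) (integrable_fourier_smul hg _)

lemma fourierCoeff_smul (c : ℂ) (f : UC → ℂ) (n : ℤ) :
    fourierCoeff (fun t => c * f t) n = c * fourierCoeff f n :=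
  fourierCoeff.const_mul f c n

structure BFS where
  X : Type
  [nacg : NormedAddCommGroup X]
  [nsp : NormedSpace ℂ X]
  [cs : CompleteSpace X]
  toAE : X →ₗ[ℂ] (UC →ₘ[mUC] ℂ)
  inj : Function.Injective toAE
  integrable : ∀ x : X, MeasureTheory.Integrable (toAE x) mUC
  lattice : ∀ (x : X) (g : UC →ₘ[mUC] ℂ), (∀ᵐ t ∂mUC, ‖g t‖ ≤ ‖toAE x t‖) →
      ∃ y : X, toAE y = g ∧ ‖y‖ ≤ ‖x‖
  one_mem : ∃ x : X, (toAE x : UC → ℂ) =ᵐ[mUC] fun _ => (1 : ℂ)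
  l1_bound : ∃ C : ℝ, 0 < C ∧ ∀ x : X, ∫ t, ‖(toAE x : UC → ℂ) t‖ ∂mUC ≤ C * ‖x‖

attribute [instance] BFS.nacg BFS.nsp BFS.cs

/-- The `n`-th Fourier coefficient, as a linear functional on a Banach function space. -/
def BFS.fc (E : BFS) (n : ℤ) : E.X →ₗ[ℂ] ℂ where
  toFun x := fourierCoeff (E.toAE x : UC → ℂ) n
  map_add' x y := by
    have h1 : (E.toAE (x + y) : UC → ℂ) =ᵐ[mUC]
        fun t => (E.toAE x : UC → ℂ) t + (E.toAE y : UC → ℂ) t := by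
      rw [map_add]; exact MeasureTheory.AEEqFun.coeFn_add _ _
    rw [fourierCoeff_congr_ae' h1 n, fourierCoeff_add (E.integrable x) (E.integrable y)]
  map_smul' c x := by
    have h1 : (E.toAE (c • x) : UC → ℂ) =ᵐ[mUC]
        fun t => c * (E.toAE x : UC → ℂ) t := by
      rw [map_smul]
      exact (MeasureTheory.AEEqFun.coeFn_smul c _).trans (by filter_upwards with t; rfl)
    rw [fourierCoeff_congr_ae' h1 n, fourierCoeff_smul]; rfl

/-- The abstract Hardy space `H[X]` built upon a Banach function space `X`. -/
def BFS.Hardy (E : BFS) : Submodule ℂ E.X where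
  carrier := {x | ∀ n : ℤ, n < 0 → E.fc n x = 0}
  add_mem' := by intro a b ha hb n hn; rw [map_add, ha n hn, hb n hn, add_zero]
  zero_mem' := by intro n hn; rw [map_zero]
  smul_mem' := by intro c x hx n hn; rw [map_smul, hx n hn, smul_zero]

/-- The essential norm: distance to the compact operators. -/
def essNorm {Y : Type*} [NormedAddCommGroup Y] [NormedSpace ℂ Y] (A : Y →L[ℂ] Y) : ℝ :=
  sInf {c : ℝ | ∃ K : Y →L[ℂ] Y, IsCompactOperator K ∧ c = ‖A - K‖}

/-- `T` is the Toeplitz operator with symbol `a` on `H[X]`: for every `f ∈ H[X]`,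
`T f = P (a f)`, i.e. the Fourier coefficients of `T f` agree with those of `a f` on
nonnegative indices (negative ones vanish automatically since `T f ∈ H[X]`). -/
def IsToeplitz (E : BFS) (a : UC → ℂ) (T : E.Hardy →L[ℂ] E.Hardy) : Prop :=
  ∀ f : E.Hardy, ∀ n : ℤ, 0 ≤ n →
    E.fc n (T f : E.X) =
      fourierCoeff (fun t => a t * (E.toAE (f : E.X) : UC → ℂ) t) n

/-- `Pp` realizes the Riesz projection `P` as a bounded operator on `X`. -/
def IsRieszOp (E : BFS) (Pp : E.X →L[ℂ] E.X) : Prop :=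
  ∀ x : E.X, (∀ n : ℤ, n < 0 → E.fc n (Pp x) = 0) ∧
    (∀ n : ℤ, 0 ≤ n → E.fc n (Pp x) = E.fc n x)

/-- Membership in the Sarason algebra `C + H^∞`. -/
def MemCplusHinf (a : UC → ℂ) : Prop :=
  ∃ (g : C(UC, ℂ)) (h : UC → ℂ), MeasureTheory.MemLp h ⊤ mUC ∧
    (∀ n : ℤ, n < 0 → fourierCoeff h n = 0) ∧ a =ᵐ[mUC] fun t => g t + h t

/-- The `n`-th Fourier partial sum `P_n f = ∑_{k=0}^{n-1} f̂(k) e_k`. -/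
def partialSum (n : ℕ) (f : UC → ℂ) : UC → ℂ :=
  fun t => ∑ k ∈ Finset.range n, fourierCoeff f (k : ℤ) • fourier (k : ℤ) t


open MeasureTheory in
lemma continuous_integrable {f : UC → ℂ} (hf : Continuous f) :
    MeasureTheory.Integrable f mUC :=
  hf.integrable_of_hasCompactSupport (HasCompactSupport.of_compactSpace f)

lemma integral_fourier_ne_zero {m : ℤ} (hm : m ≠ 0) :
    ∫ t, (fourier m t : ℂ) ∂mUC = 0 := by
  have h1 : ∫ t, (fourier m t : ℂ) ∂mUC
      = ∫ t, (fourier m (t + ((2 * Real.pi / 2 / m : ℝ) : UC)) : ℂ) ∂mUC := by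
    rw [MeasureTheory.integral_add_right_eq_self
      (μ := mUC) (fun t => (fourier m t : ℂ)) _]
  have h2 : ∀ t : UC, (fourier m (t + ((2 * Real.pi / 2 / m : ℝ) : UC)) : ℂ)
      = -(fourier m t : ℂ) := fun t => by
    simpa using fourier_add_half_inv_index hm (by positivity) t
  simp_rw [h2, MeasureTheory.integral_neg] at h1
  have h3 : (2 : ℂ) * ∫ t, (fourier m t : ℂ) ∂mUC = 0 := by
    rw [two_mul, ← sub_neg_eq_add, sub_eq_zero]
    exact h1
  exact (mul_eq_zero.mp h3).resolve_left two_ne_zero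

lemma integral_fourier (m : ℤ) :
    ∫ t, (fourier m t : ℂ) ∂mUC = if m = 0 then 1 else 0 := by
  split_ifs with h
  · subst h; simp [fourier_zero]
  · exact integral_fourier_ne_zero h

lemma fourierCoeff_fourier_mul (j m : ℤ) (u : UC → ℂ) :
    fourierCoeff (fun t => (fourier j t : ℂ) * u t) m = fourierCoeff u (m - j) := by
  unfold fourierCoeff
  congr 1
  funext t
  have : (fourier (-(m - j)) t : ℂ) = (fourier (-m) t : ℂ) * (fourier j t : ℂ) := by
    rw [show -(m - j) = -m + j by ring, fourier_add]
  simp only [smul_eq_mul, this]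
  ring

lemma fourierCoeff_one (m : ℤ) :
    fourierCoeff (fun _ : UC => (1 : ℂ)) m = if m = 0 then 1 else 0 := by
  unfold fourierCoeff
  simp_rw [smul_eq_mul, mul_one]
  rw [integral_fourier (-m)]
  simp [neg_eq_zero]

lemma fourierCoeff_fourier' (j m : ℤ) :
    fourierCoeff (fun t : UC => (fourier j t : ℂ)) m = if j = m then 1 else 0 := by
  have h := fourierCoeff_fourier_mul j m (fun _ => (1 : ℂ))
  simp only [mul_one] at h
  rw [h, fourierCoeff_one]
  by_cases hc : j = m <;> simp [hc, sub_eq_zero, eq_comm]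
open MeasureTheory in
lemma _dummyFejer : True := trivial

/-- Dirichlet-type sum `D_N`. -/
def Dker (N : ℕ) : UC → ℂ := fun t => ∑ k ∈ Finset.range N, (fourier (k : ℤ) t : ℂ)

lemma continuous_Dker (N : ℕ) : Continuous (Dker N) :=
  continuous_finset_sum _ fun k _ => (fourier (k : ℤ)).continuous

/-- Fejér kernel, real-valued. -/
def Krk (N : ℕ) : UC → ℝ := fun t => (N : ℝ)⁻¹ * ‖Dker N t‖ ^ 2

/-- Fejér kernel, complex-valued. -/
def Kck (N : ℕ) : UC → ℂ := fun t => ((Krk N t : ℝ) : ℂ)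

lemma Krk_nonneg (N : ℕ) (t : UC) : 0 ≤ Krk N t := by
  unfold Krk; positivity

lemma continuous_Krk (N : ℕ) : Continuous (Krk N) :=
  continuous_const.mul (((continuous_Dker N).norm).pow 2)

lemma continuous_Kck (N : ℕ) : Continuous (Kck N) :=
  Complex.continuous_ofReal.comp (continuous_Krk N)

lemma norm_Kck (N : ℕ) (t : UC) : ‖Kck N t‖ = Krk N t := by
  rw [Kck, Complex.norm_real, Real.norm_eq_abs, _root_.abs_of_nonneg (Krk_nonneg N t)]

lemma fourier_neg_arg (n : ℤ) (x : UC) : (fourier n (-x) : ℂ) = (fourier (-n) x : ℂ) := by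
  have h : n • (-x) = (-n) • x := by rw [zsmul_neg, neg_zsmul]
  rw [fourier_apply, fourier_apply, h]

lemma Dker_neg (N : ℕ) (x : UC) : Dker N (-x) = (starRingEnd ℂ) (Dker N x) := by
  unfold Dker
  rw [map_sum]
  exact Finset.sum_congr rfl fun k _ => by rw [fourier_neg_arg, fourier_neg]

lemma Kck_sub_comm (N : ℕ) (t s : UC) : Kck N (t - s) = Kck N (s - t) := by
  unfold Kck Krk
  rw [show s - t = -(t - s) by abel, Dker_neg, RCLike.norm_conj]

lemma Kck_eq_sum (N : ℕ) (t : UC) :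
    Kck N t = (N : ℂ)⁻¹ * ∑ j ∈ Finset.range N, ∑ k ∈ Finset.range N,
      (fourier ((k : ℤ) - j) t : ℂ) := by
  have h1 : Dker N t * (starRingEnd ℂ) (Dker N t)
      = ∑ j ∈ Finset.range N, ∑ k ∈ Finset.range N, (fourier ((k : ℤ) - j) t : ℂ) := by
    unfold Dker
    rw [map_sum, Finset.sum_mul_sum, Finset.sum_comm]
    refine Finset.sum_congr rfl fun j _ => Finset.sum_congr rfl fun k _ => ?_
    rw [sub_eq_add_neg, fourier_add, fourier_neg]
  have h2 : ((‖Dker N t‖ ^ 2 : ℝ) : ℂ) = Dker N t * (starRingEnd ℂ) (Dker N t) := by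
    rw [Complex.mul_conj, Complex.normSq_eq_norm_sq]
  unfold Kck Krk
  rw [show ((((N : ℝ))⁻¹ * ‖Dker N t‖ ^ 2 : ℝ) : ℂ)
      = (N : ℂ)⁻¹ * ((‖Dker N t‖ ^ 2 : ℝ) : ℂ) by push_cast; ring, h2, h1]

lemma integral_Kck (N : ℕ) (hN : 1 ≤ N) : ∫ t, Kck N t ∂mUC = 1 := by
  simp_rw [Kck_eq_sum]
  rw [MeasureTheory.integral_const_mul,
    MeasureTheory.integral_finset_sum _ (fun j _ => continuous_integrable
      (continuous_finset_sum _ fun k _ => (fourier _).continuous))]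
  have : ∀ j ∈ Finset.range N,
      (∫ t, (∑ k ∈ Finset.range N, (fourier ((k : ℤ) - j) t : ℂ)) ∂mUC) = 1 := by
    intro j hj
    rw [MeasureTheory.integral_finset_sum _
      (fun k _ => continuous_integrable (fourier _).continuous)]
    have : ∀ k ∈ Finset.range N, (∫ t, (fourier ((k : ℤ) - j) t : ℂ) ∂mUC)
        = if k = j then 1 else 0 := by
      intro k _
      rw [integral_fourier]
      congr 1
      simp [sub_eq_zero]
    rw [Finset.sum_congr rfl this, Finset.sum_ite_eq' (Finset.range N) j fun _ => (1 : ℂ)]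
    simp [Finset.mem_range.mpr (Finset.mem_range.mp hj)]
  rw [Finset.sum_congr rfl this]
  simp only [Finset.sum_const, Finset.card_range, nsmul_eq_mul, mul_one]
  rw [inv_mul_cancel₀]
  exact Nat.cast_ne_zero.mpr (by omega)
  
lemma integral_Krk (N : ℕ) (hN : 1 ≤ N) : ∫ t, Krk N t ∂mUC = 1 := by
  have h3 := integral_re (μ := mUC) (f := Kck N) (continuous_integrable (continuous_Kck N))
  simp only [RCLike.re_eq_complex_re] at h3
  have h4 : (fun t => (Kck N t).re) = fun t => Krk N t := funext fun t => Complex.ofReal_re _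
  rw [h4] at h3
  rw [h3, integral_Kck N hN, Complex.one_re]

open MeasureTheory in
lemma cont_bound {k : UC → ℂ} (hk : Continuous k) : ∃ C, ∀ t, ‖k t‖ ≤ C := by
  refine ⟨‖BoundedContinuousFunction.mkOfCompact ⟨k, hk⟩‖, fun t => ?_⟩
  exact BoundedContinuousFunction.norm_coe_le_norm (BoundedContinuousFunction.mkOfCompact ⟨k, hk⟩) t

open MeasureTheory in
lemma cont_bound2 {k : UC × UC → ℂ} (hk : Continuous k) : ∃ C, ∀ t, ‖k t‖ ≤ C := by
  refine ⟨‖BoundedContinuousFunction.mkOfCompact ⟨k, hk⟩‖, fun t => ?_⟩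
  exact BoundedContinuousFunction.norm_coe_le_norm (BoundedContinuousFunction.mkOfCompact ⟨k, hk⟩) t

/-- Fejér mean, as a convolution. -/
def sigma (N : ℕ) (u : UC → ℂ) : UC → ℂ := fun t => ∫ s, Kck N (t - s) * u s ∂mUC

open MeasureTheory in
lemma integrable_prod_kernel {k : UC × UC → ℂ} (hk : Continuous k) {u : UC → ℂ}
    (hu : Integrable u mUC) :
    Integrable (fun p : UC × UC => k p * u p.2) (mUC.prod mUC) := by
  have h1 : Integrable (fun p : UC × UC => u p.2) (mUC.prod mUC) := by
    simpa using (MeasureTheory.integrable_const (1 : ℂ)).mul_prod hu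
  exact h1.bdd_mul hk.aestronglyMeasurable (Filter.Eventually.of_forall (cont_bound2 hk).choose_spec)

lemma continuous_kernel_sub (N : ℕ) :
    Continuous (fun p : UC × UC => Kck N (p.1 - p.2)) :=
  (continuous_Kck N).comp (continuous_fst.sub continuous_snd)

open MeasureTheory in
lemma integrable_sigma_kernel (N : ℕ) {u : UC → ℂ} (hu : Integrable u mUC) :
    Integrable (fun p : UC × UC => Kck N (p.1 - p.2) * u p.2) (mUC.prod mUC) :=
  integrable_prod_kernel (continuous_kernel_sub N) hu

open MeasureTheory in
lemma integrable_sigma_slice (N : ℕ) {u : UC → ℂ} (hu : Integrable u mUC) (t : UC) :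
    Integrable (fun s => Kck N (t - s) * u s) mUC :=
  hu.bdd_mul ((continuous_Kck N).comp (continuous_const.sub continuous_id)).aestronglyMeasurable
    (Filter.Eventually.of_forall (cont_bound ((continuous_Kck N).comp (continuous_const.sub continuous_id))).choose_spec)

open MeasureTheory in
lemma sigma_integrable (N : ℕ) {u : UC → ℂ} (hu : Integrable u mUC) :
    Integrable (sigma N u) mUC :=
  (integrable_sigma_kernel N hu).integral_prod_left

open MeasureTheory in
lemma sigma_sub_eq (N : ℕ) {u v : UC → ℂ} (hu : Integrable u mUC) (hv : Integrable v mUC) :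
    ∀ t, sigma N (fun s => u s - v s) t = sigma N u t - sigma N v t := by
  intro t
  unfold sigma
  simp_rw [mul_sub]
  exact MeasureTheory.integral_sub (integrable_sigma_slice N hu t) (integrable_sigma_slice N hv t)

lemma fourier_add_arg (m : ℤ) (x y : UC) :
    (fourier m (x + y) : ℂ) = fourier m x * fourier m y := by
  rw [fourier_apply, fourier_apply, fourier_apply, smul_add, AddCircle.toCircle_add]
  simp

open MeasureTheory in
lemma integrable_fourier_shift_mul (m : ℤ) {u : UC → ℂ} (hu : Integrable u mUC) (t : UC) :
    Integrable (fun s => (fourier m (t - s) : ℂ) * u s) mUC := by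
  have hc : Continuous (fun s : UC => (fourier m (t - s) : ℂ)) :=
    (map_continuous (fourier m)).comp (continuous_const.sub continuous_id)
  exact hu.bdd_mul hc.aestronglyMeasurable (Filter.Eventually.of_forall (cont_bound hc).choose_spec)

open MeasureTheory in
lemma integral_fourier_shift (m : ℤ) {u : UC → ℂ} (t : UC) :
    ∫ s, (fourier m (t - s) : ℂ) * u s ∂mUC = (fourier m t : ℂ) * fourierCoeff u m := by
  unfold fourierCoeff
  rw [← MeasureTheory.integral_const_mul]
  congr 1
  funext s
  rw [show t - s = t + (-s) by abel, fourier_add_arg, fourier_neg_arg]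
  simp only [smul_eq_mul]
  ring

open MeasureTheory in
lemma sigma_eq_sum (N : ℕ) {u : UC → ℂ} (hu : Integrable u mUC) (t : UC) :
    sigma N u t = (N : ℂ)⁻¹ * ∑ j ∈ Finset.range N, ∑ k ∈ Finset.range N,
      (fourier ((k : ℤ) - j) t : ℂ) * fourierCoeff u ((k : ℤ) - j) := by
  unfold sigma
  have step1 : ∀ s, Kck N (t - s) * u s = (N : ℂ)⁻¹ * ∑ j ∈ Finset.range N,
      ∑ k ∈ Finset.range N, (fourier ((k : ℤ) - j) (t - s) : ℂ) * u s := by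
    intro s
    rw [Kck_eq_sum, mul_assoc]
    congr 1
    rw [Finset.sum_mul]
    exact Finset.sum_congr rfl fun j _ => by rw [Finset.sum_mul]
  simp_rw [step1]
  rw [MeasureTheory.integral_const_mul]
  congr 1
  rw [MeasureTheory.integral_finset_sum _ (fun j _ => MeasureTheory.integrable_finset_sum _
    (fun k _ => integrable_fourier_shift_mul _ hu t))]
  refine Finset.sum_congr rfl fun j _ => ?_
  rw [MeasureTheory.integral_finset_sum _
    (fun k _ => integrable_fourier_shift_mul _ hu t)]
  exact Finset.sum_congr rfl fun k _ => integral_fourier_shift _ t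

open MeasureTheory in
lemma sigma_L1_le (N : ℕ) (hN : 1 ≤ N) {u : UC → ℂ} (hu : Integrable u mUC) :
    ∫ t, ‖sigma N u t‖ ∂mUC ≤ ∫ t, ‖u t‖ ∂mUC := by
  have hF := integrable_sigma_kernel N hu
  have hFn := hF.norm
  have h1 : ∀ t, ‖sigma N u t‖ ≤ ∫ s, ‖Kck N (t - s) * u s‖ ∂mUC := fun t =>
    MeasureTheory.norm_integral_le_integral_norm _
  have h2 : Integrable (fun t => ∫ s, ‖Kck N (t - s) * u s‖ ∂mUC) mUC :=
    hFn.integral_prod_left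
  refine (MeasureTheory.integral_mono (sigma_integrable N hu).norm h2 h1).trans ?_
  have h4 : (∫ t, ∫ s, ‖Kck N (t - s) * u s‖ ∂mUC ∂mUC)
      = ∫ s, ∫ t, ‖Kck N (t - s) * u s‖ ∂mUC ∂mUC :=
    MeasureTheory.integral_integral_swap hFn
  rw [h4]
  have h5 : ∀ s : UC, (∫ t, ‖Kck N (t - s) * u s‖ ∂mUC) = ‖u s‖ := by
    intro s
    simp_rw [norm_mul, norm_Kck]
    rw [MeasureTheory.integral_mul_const]
    rw [MeasureTheory.integral_sub_right_eq_self (fun t => Krk N t) s,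
      integral_Krk N hN, one_mul]
  simp_rw [h5, le_refl]

open MeasureTheory in
lemma sigma_symm (N : ℕ) {u v : UC → ℂ} (hu : Integrable u mUC) (hv : Integrable v mUC) :
    ∫ t, sigma N u t * v t ∂mUC = ∫ s, sigma N v s * u s ∂mUC := by
  have hcont : Continuous (fun p : UC × UC => Kck N (p.1 - p.2)) := continuous_kernel_sub N
  have hF : Integrable (fun p : UC × UC => Kck N (p.1 - p.2) * (u p.2 * v p.1))
      (mUC.prod mUC) := by
    have h1 : Integrable (fun p : UC × UC => v p.1 * u p.2) (mUC.prod mUC) := hv.mul_prod hu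
    have h1' : Integrable (fun p : UC × UC => u p.2 * v p.1) (mUC.prod mUC) := by
      simpa [mul_comm] using h1
    exact h1'.bdd_mul hcont.aestronglyMeasurable (Filter.Eventually.of_forall (cont_bound2 hcont).choose_spec)
  have lhs : ∫ t, sigma N u t * v t ∂mUC
      = ∫ t, ∫ s, Kck N (t - s) * (u s * v t) ∂mUC ∂mUC := by
    congr 1
    funext t
    unfold sigma
    rw [← MeasureTheory.integral_mul_const]
    congr 1
    funext s
    ring
  have swap : (∫ t, ∫ s, Kck N (t - s) * (u s * v t) ∂mUC ∂mUC)
      = ∫ s, ∫ t, Kck N (t - s) * (u s * v t) ∂mUC ∂mUC :=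
    MeasureTheory.integral_integral_swap hF
  have rhs : ∀ s, (∫ t, Kck N (t - s) * (u s * v t) ∂mUC) = sigma N v s * u s := by
    intro s
    unfold sigma
    rw [← MeasureTheory.integral_mul_const]
    congr 1
    funext t
    rw [Kck_sub_comm]
    ring
  rw [lhs, swap]
  simp_rw [rhs]
/-- Number of pairs `(j, l)` in `[0,N)²` with `l - j = q`. -/
def cnt (N : ℕ) (q : ℤ) : ℕ :=
  ((Finset.range N ×ˢ Finset.range N).filter (fun p => (p.2 : ℤ) - (p.1 : ℤ) = q)).card

lemma cnt_eq (N : ℕ) (q : ℤ) (h : q.natAbs ≤ N) : cnt N q = N - q.natAbs := by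
  rw [cnt, show N - q.natAbs = (Finset.range (N - q.natAbs)).card from
    (Finset.card_range _).symm]
  refine Finset.card_bij' (fun p _ => p.1 - (-q).toNat)
    (fun m _ => (m + (-q).toNat, m + q.toNat)) ?_ ?_ ?_ ?_
  · intro p hp
    simp only [Finset.mem_filter, Finset.mem_product, Finset.mem_range] at hp ⊢
    omega
  · intro m hm
    simp only [Finset.mem_filter, Finset.mem_product, Finset.mem_range] at hm ⊢
    omega
  · intro p hp
    simp only [Finset.mem_filter, Finset.mem_product, Finset.mem_range] at hp
    obtain ⟨⟨h1, h2⟩, h3⟩ := hp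
    show (p.1 - (-q).toNat + (-q).toNat, p.1 - (-q).toNat + q.toNat) = p
    ext
    · show p.1 - (-q).toNat + (-q).toNat = p.1
      omega
    · show p.1 - (-q).toNat + q.toNat = p.2
      omega
  · intro m hm
    simp only [Finset.mem_range] at hm
    show m + (-q).toNat - (-q).toNat = m
    omega

open MeasureTheory in
lemma sigma_fourier (N : ℕ) (q : ℤ) (t : UC) :
    sigma N (fun s => (fourier q s : ℂ)) t = (N : ℂ)⁻¹ * (cnt N q : ℂ) * fourier q t := by
  rw [sigma_eq_sum N (continuous_integrable (fourier q).continuous) t, mul_assoc]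
  congr 1
  calc ∑ j ∈ Finset.range N, ∑ k ∈ Finset.range N,
        (fourier ((k : ℤ) - j) t : ℂ) * fourierCoeff (fun s : UC => (fourier q s : ℂ)) ((k : ℤ) - j)
      = ∑ j ∈ Finset.range N, ∑ k ∈ Finset.range N,
        (if ((k : ℤ) - j = q) then (fourier q t : ℂ) else 0) := by
        refine Finset.sum_congr rfl fun j _ => Finset.sum_congr rfl fun k _ => ?_
        rw [fourierCoeff_fourier']
        by_cases hc : (k : ℤ) - j = q
        · subst hc; simp
        · rw [if_neg hc, if_neg (fun hq => hc hq.symm), mul_zero]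
    _ = ∑ p ∈ Finset.range N ×ˢ Finset.range N,
        (if ((p.2 : ℤ) - p.1 = q) then (fourier q t : ℂ) else 0) := by
        rw [Finset.sum_product]
    _ = (cnt N q : ℂ) * fourier q t := by
        rw [← Finset.sum_filter, Finset.sum_const, cnt, nsmul_eq_mul]

lemma tendsto_coeff (q : ℤ) :
    Filter.Tendsto (fun N : ℕ => ‖(N : ℂ)⁻¹ * (cnt N q : ℂ) - 1‖) Filter.atTop (nhds 0) := by
  have hev : ∀ᶠ N : ℕ in Filter.atTop,
      ‖(N : ℂ)⁻¹ * (cnt N q : ℂ) - 1‖ = (q.natAbs : ℝ) / N := by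
    filter_upwards [Filter.eventually_ge_atTop (max 1 q.natAbs)] with N hN
    have h1 : 1 ≤ N := le_trans (le_max_left _ _) hN
    have h2 : q.natAbs ≤ N := le_trans (le_max_right _ _) hN
    have hN0 : (N : ℝ) ≠ 0 := Nat.cast_ne_zero.mpr (by omega)
    rw [cnt_eq N q h2]
    have hcast : (N : ℂ)⁻¹ * ((N - q.natAbs : ℕ) : ℂ) - 1
        = ((((N : ℝ) - q.natAbs) / N - 1 : ℝ) : ℂ) := by
      rw [Nat.cast_sub h2]
      push_cast
      ring
    rw [hcast, Complex.norm_real, Real.norm_eq_abs]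
    have : ((N : ℝ) - q.natAbs) / N - 1 = -((q.natAbs : ℝ) / N) := by
      field_simp
      ring
    rw [this, abs_neg, _root_.abs_of_nonneg (by positivity)]
  exact Filter.Tendsto.congr' (Filter.EventuallyEq.symm hev)
    (tendsto_const_div_atTop_nhds_zero_nat _)

open MeasureTheory in
lemma sigma_add_eq (N : ℕ) {u v : UC → ℂ} (hu : Integrable u mUC) (hv : Integrable v mUC) :
    ∀ t, sigma N (fun s => u s + v s) t = sigma N u t + sigma N v t := by
  intro t
  unfold sigma
  simp_rw [mul_add]
  exact MeasureTheory.integral_add (integrable_sigma_slice N hu t) (integrable_sigma_slice N hv t)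

open MeasureTheory in
lemma sigma_smul_eq (N : ℕ) (c : ℂ) (u : UC → ℂ) :
    ∀ t, sigma N (fun s => c * u s) t = c * sigma N u t := by
  intro t
  unfold sigma
  rw [← MeasureTheory.integral_const_mul]
  congr 1
  funext s
  ring

open MeasureTheory in
lemma integral_const_prob (c : ℝ) : ∫ _ : UC, c ∂mUC = c := by
  simp

open MeasureTheory in
lemma tendsto_sigma_span (p : C(UC, ℂ))
    (hp : p ∈ Submodule.span ℂ (Set.range (@fourier (2 * Real.pi)))) :
    Filter.Tendsto (fun N => ∫ t, ‖sigma N (⇑p) t - p t‖ ∂mUC) Filter.atTop (nhds 0) := by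
  induction hp using Submodule.span_induction with
  | mem x hx =>
    obtain ⟨q, rfl⟩ := hx
    have hcalc : ∀ N : ℕ, (∫ t, ‖sigma N (⇑(fourier q)) t - fourier q t‖ ∂mUC)
        = ‖(N : ℂ)⁻¹ * (cnt N q : ℂ) - 1‖ := by
      intro N
      have : ∀ t : UC, ‖sigma N (⇑(fourier q)) t - fourier q t‖
          = ‖(N : ℂ)⁻¹ * (cnt N q : ℂ) - 1‖ := by
        intro t
        have hs : sigma N (⇑(fourier q)) t = (N : ℂ)⁻¹ * (cnt N q : ℂ) * fourier q t :=
          sigma_fourier N q t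
        rw [hs, show ((N : ℂ)⁻¹ * (cnt N q : ℂ)) * (fourier q t : ℂ) - fourier q t
          = ((N : ℂ)⁻¹ * (cnt N q : ℂ) - 1) * fourier q t by ring, norm_mul,
          norm_fourier_eq_one, mul_one]
      simp_rw [this]
      exact integral_const_prob _
    simp_rw [hcalc]
    exact tendsto_coeff q
  | zero =>
    have : ∀ N : ℕ, (∫ t, ‖sigma N (⇑(0 : C(UC, ℂ))) t - (0 : C(UC, ℂ)) t‖ ∂mUC) = 0 := by
      intro N
      have hz : ∀ t : UC, sigma N (⇑(0 : C(UC, ℂ))) t = 0 := by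
        intro t
        unfold sigma
        simp
      simp_rw [hz]
      simp
    simp_rw [this]
    exact tendsto_const_nhds
  | add x y hx hy ihx ihy =>
    have hxi : Integrable (⇑x) mUC := continuous_integrable x.continuous
    have hyi : Integrable (⇑y) mUC := continuous_integrable y.continuous
    refine squeeze_zero (fun N => integral_nonneg fun t => norm_nonneg _)
      (fun N => ?_) (by simpa using ihx.add ihy)
    have hbound : ∀ t, ‖sigma N (⇑(x + y)) t - (x + y) t‖
        ≤ ‖sigma N (⇑x) t - x t‖ + ‖sigma N (⇑y) t - y t‖ := by
      intro t
      have hxy : sigma N (⇑(x + y)) t = sigma N (⇑x) t + sigma N (⇑y) t := by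
        have := sigma_add_eq N hxi hyi t
        exact this
      rw [hxy, ContinuousMap.add_apply]
      calc ‖sigma N (⇑x) t + sigma N (⇑y) t - (x t + y t)‖
          = ‖(sigma N (⇑x) t - x t) + (sigma N (⇑y) t - y t)‖ := by ring_nf
        _ ≤ _ := norm_add_le _ _
    calc (∫ t, ‖sigma N (⇑(x + y)) t - (x + y) t‖ ∂mUC)
        ≤ ∫ t, (‖sigma N (⇑x) t - x t‖ + ‖sigma N (⇑y) t - y t‖) ∂mUC := by
          refine MeasureTheory.integral_mono ?_ ?_ hbound
          · exact ((sigma_integrable N (continuous_integrable (x + y).continuous)).sub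
              (continuous_integrable (x + y).continuous)).norm
          · exact (((sigma_integrable N hxi).sub hxi).norm).add
              (((sigma_integrable N hyi).sub hyi).norm)
      _ = (∫ t, ‖sigma N (⇑x) t - x t‖ ∂mUC) + ∫ t, ‖sigma N (⇑y) t - y t‖ ∂mUC :=
          MeasureTheory.integral_add (((sigma_integrable N hxi).sub hxi).norm)
            (((sigma_integrable N hyi).sub hyi).norm)
  | smul a x hx ihx =>
    have hxi : Integrable (⇑x) mUC := continuous_integrable x.continuous
    have hcalc : ∀ N : ℕ, (∫ t, ‖sigma N (⇑(a • x)) t - (a • x) t‖ ∂mUC)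
        = ‖a‖ * ∫ t, ‖sigma N (⇑x) t - x t‖ ∂mUC := by
      intro N
      rw [← MeasureTheory.integral_const_mul]
      congr 1
      funext t
      have hax : sigma N (⇑(a • x)) t = a * sigma N (⇑x) t := by
        have := sigma_smul_eq N a (⇑x) t
        exact this
      rw [hax, ContinuousMap.smul_apply, smul_eq_mul, ← mul_sub, norm_mul]
    simp_rw [hcalc]
    simpa using ihx.const_mul ‖a‖
open MeasureTheory in
lemma exists_span_L1_close {u : UC → ℂ} (hu : Integrable u mUC) {ε : ℝ} (hε : 0 < ε) :
    ∃ p : C(UC, ℂ), p ∈ Submodule.span ℂ (Set.range (@fourier (2 * Real.pi))) ∧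
      ∫ t, ‖u t - p t‖ ∂mUC < ε := by
  obtain ⟨g, hg1, hg2⟩ := hu.exists_boundedContinuous_integral_sub_le (by positivity : 0 < ε / 4)
  have hgc : (g.toContinuousMap : C(UC, ℂ)) ∈
      closure ((Submodule.span ℂ (Set.range (@fourier (2 * Real.pi)))) : Set C(UC, ℂ)) := by
    have htop := span_fourier_closure_eq_top (T := 2 * Real.pi)
    have : (g.toContinuousMap : C(UC, ℂ)) ∈
        (Submodule.span ℂ (Set.range (@fourier (2 * Real.pi)))).topologicalClosure := by
      rw [htop]; trivial
    rw [← Submodule.topologicalClosure_coe]; exact this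
  obtain ⟨p, hp_mem, hp_close⟩ := Metric.mem_closure_iff.mp hgc (ε / 4) (by positivity)
  refine ⟨p, hp_mem, ?_⟩
  have hpt : ∀ t : UC, ‖g t - p t‖ ≤ ε / 4 := by
    intro t
    have := ContinuousMap.dist_apply_le_dist (f := g.toContinuousMap) (g := p) t
    rw [dist_eq_norm] at this
    exact this.trans (le_of_lt (by simpa [dist_comm] using hp_close))
  have h1 : (∫ t, ‖u t - p t‖ ∂mUC) ≤ ∫ t, (‖u t - g t‖ + ‖g t - p t‖) ∂mUC := by
    refine MeasureTheory.integral_mono ?_ ?_ fun t => ?_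
    · exact (hu.sub (continuous_integrable p.continuous)).norm
    · exact ((hu.sub hg2).norm).add
        ((hg2.sub (continuous_integrable p.continuous)).norm)
    · calc ‖u t - p t‖ = ‖(u t - g t) + (g t - p t)‖ := by ring_nf
        _ ≤ ‖u t - g t‖ + ‖g t - p t‖ := norm_add_le _ _
  have h2 : (∫ t, (‖u t - g t‖ + ‖g t - p t‖) ∂mUC)
      = (∫ t, ‖u t - g t‖ ∂mUC) + ∫ t, ‖g t - p t‖ ∂mUC :=
    MeasureTheory.integral_add ((hu.sub hg2).norm)
      ((hg2.sub (continuous_integrable p.continuous)).norm)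
  have h3 : (∫ t, ‖g t - p t‖ ∂mUC) ≤ ε / 4 := by
    have := MeasureTheory.integral_mono
      ((hg2.sub (continuous_integrable p.continuous)).norm)
      (MeasureTheory.integrable_const (ε / 4)) hpt
    simpa [integral_const_prob] using this
  have hg1' : (∫ t, ‖u t - g t‖ ∂mUC) ≤ ε / 4 := hg1
  calc (∫ t, ‖u t - p t‖ ∂mUC) ≤ _ := h1
    _ = _ := h2
    _ ≤ ε / 4 + ε / 4 := add_le_add hg1' h3
    _ < ε := by linarith

open MeasureTheory in
lemma tendsto_sigma_L1 {u : UC → ℂ} (hu : Integrable u mUC) :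
    Filter.Tendsto (fun N => ∫ t, ‖sigma N u t - u t‖ ∂mUC) Filter.atTop (nhds 0) := by
  rw [Metric.tendsto_atTop]
  intro ε hε
  obtain ⟨p, hp_mem, hp_close⟩ := exists_span_L1_close hu (by positivity : 0 < ε / 3)
  have hpi : Integrable (⇑p) mUC := continuous_integrable p.continuous
  obtain ⟨N₀, hN₀⟩ := Metric.tendsto_atTop.mp (tendsto_sigma_span p hp_mem) (ε / 3)
    (by positivity)
  refine ⟨max N₀ 1, fun N hN => ?_⟩
  have hN1 : 1 ≤ N := le_trans (le_max_right _ _) hN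
  have hN0' : N₀ ≤ N := le_trans (le_max_left _ _) hN
  have haux : (∫ t, ‖sigma N (⇑p) t - p t‖ ∂mUC) < ε / 3 := by
    have := hN₀ N hN0'
    rw [Real.dist_eq, sub_zero, _root_.abs_of_nonneg
      (integral_nonneg fun t => norm_nonneg _)] at this
    exact this
  have hsub : Integrable (fun s => u s - p s) mUC := hu.sub hpi
  have hkey : (∫ t, ‖sigma N u t - u t‖ ∂mUC)
      ≤ (∫ t, ‖sigma N (fun s => u s - p s) t‖ ∂mUC)
        + ((∫ t, ‖sigma N (⇑p) t - p t‖ ∂mUC) + ∫ t, ‖u t - p t‖ ∂mUC) := by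
    have hptw : ∀ t, ‖sigma N u t - u t‖
        ≤ ‖sigma N (fun s => u s - p s) t‖
          + (‖sigma N (⇑p) t - p t‖ + ‖u t - p t‖) := by
      intro t
      have hdiff : sigma N (fun s => u s - p s) t = sigma N u t - sigma N (⇑p) t :=
        sigma_sub_eq N hu hpi t
      calc ‖sigma N u t - u t‖
          = ‖(sigma N u t - sigma N (⇑p) t) + ((sigma N (⇑p) t - p t) + (p t - u t))‖ := by
            ring_nf
        _ ≤ ‖sigma N u t - sigma N (⇑p) t‖ + ‖(sigma N (⇑p) t - p t) + (p t - u t)‖ :=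
            norm_add_le _ _
        _ ≤ ‖sigma N u t - sigma N (⇑p) t‖ + (‖sigma N (⇑p) t - p t‖ + ‖p t - u t‖) := by
            exact add_le_add le_rfl (norm_add_le _ _)
        _ = ‖sigma N (fun s => u s - p s) t‖ + (‖sigma N (⇑p) t - p t‖ + ‖u t - p t‖) := by
            rw [hdiff, norm_sub_rev (p t)]
    have hi1 : Integrable (fun t => ‖sigma N (fun s => u s - p s) t‖) mUC :=
      (sigma_integrable N hsub).norm
    have hi2 : Integrable (fun t => ‖sigma N (⇑p) t - p t‖) mUC :=
      ((sigma_integrable N hpi).sub hpi).norm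
    have hi3 : Integrable (fun t => ‖u t - p t‖) mUC := (hu.sub hpi).norm
    calc (∫ t, ‖sigma N u t - u t‖ ∂mUC)
        ≤ ∫ t, (‖sigma N (fun s => u s - p s) t‖
            + (‖sigma N (⇑p) t - p t‖ + ‖u t - p t‖)) ∂mUC := by
          refine MeasureTheory.integral_mono ?_ ?_ hptw
          · exact ((sigma_integrable N hu).sub hu).norm
          · exact hi1.add (hi2.add hi3)
      _ = _ := by
          have e1 : (∫ t, (‖sigma N (fun s => u s - p s) t‖
              + (‖sigma N (⇑p) t - p t‖ + ‖u t - p t‖)) ∂mUC)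
              = (∫ t, ‖sigma N (fun s => u s - p s) t‖ ∂mUC)
                + ∫ t, (‖sigma N (⇑p) t - p t‖ + ‖u t - p t‖) ∂mUC :=
            MeasureTheory.integral_add hi1 (hi2.add hi3)
          have e2 : (∫ t, (‖sigma N (⇑p) t - p t‖ + ‖u t - p t‖) ∂mUC)
              = (∫ t, ‖sigma N (⇑p) t - p t‖ ∂mUC) + ∫ t, ‖u t - p t‖ ∂mUC :=
            MeasureTheory.integral_add hi2 hi3
          rw [e1, e2]
  have hcontr : (∫ t, ‖sigma N (fun s => u s - p s) t‖ ∂mUC)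
      ≤ ∫ t, ‖u t - p t‖ ∂mUC := by
    have := sigma_L1_le N hN1 hsub
    simpa using this
  have hfinal : (∫ t, ‖sigma N u t - u t‖ ∂mUC) < ε := by
    have := hkey.trans (add_le_add hcontr (le_refl _))
    calc (∫ t, ‖sigma N u t - u t‖ ∂mUC)
        ≤ (∫ t, ‖u t - p t‖ ∂mUC) + ((∫ t, ‖sigma N (⇑p) t - p t‖ ∂mUC)
            + ∫ t, ‖u t - p t‖ ∂mUC) := this
      _ < ε / 3 + (ε / 3 + ε / 3) := by
          have h1 := hp_close
          have h2 := haux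
          linarith
      _ = ε := by ring
  rw [Real.dist_eq, sub_zero, _root_.abs_of_nonneg (integral_nonneg fun t => norm_nonneg _)]
  exact hfinal

open MeasureTheory in
/-- Uniqueness: an integrable function with all Fourier coefficients zero vanishes a.e. -/
lemma ae_zero_of_fourierCoeff_zero {u : UC → ℂ} (hu : Integrable u mUC)
    (h : ∀ m : ℤ, fourierCoeff u m = 0) : u =ᵐ[mUC] 0 := by
  have hsig : ∀ N t, sigma N u t = 0 := by
    intro N t
    rw [sigma_eq_sum N hu t]
    have : ∀ j ∈ Finset.range N, ∀ k ∈ Finset.range N,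
        (fourier ((k : ℤ) - j) t : ℂ) * fourierCoeff u ((k : ℤ) - j) = 0 := by
      intro j _ k _
      rw [h, mul_zero]
    rw [Finset.sum_congr rfl fun j hj => Finset.sum_congr rfl fun k hk => this j hj k hk]
    simp
  have hconst : ∀ N : ℕ, (∫ t, ‖sigma N u t - u t‖ ∂mUC) = ∫ t, ‖u t‖ ∂mUC := by
    intro N
    congr 1
    funext t
    rw [hsig, zero_sub, norm_neg]
  have htend := tendsto_sigma_L1 hu
  simp_rw [hconst] at htend
  have hzero : (∫ t, ‖u t‖ ∂mUC) = 0 := tendsto_nhds_unique tendsto_const_nhds htend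
  have := (MeasureTheory.integral_eq_zero_iff_of_nonneg
    (fun t => norm_nonneg (u t)) hu.norm).mp hzero
  filter_upwards [this] with t ht
  simpa using ht
open MeasureTheory in
lemma memLinfty_bound {h : UC → ℂ} (hh : MeasureTheory.MemLp h ⊤ mUC) :
    ∀ᵐ t ∂mUC, ‖h t‖ ≤ (MeasureTheory.eLpNorm h ⊤ mUC).toReal := by
  have hb := MeasureTheory.ae_le_eLpNormEssSup (f := h) (μ := mUC)
  have hfin : MeasureTheory.eLpNorm h ⊤ mUC < ⊤ := hh.2
  rw [MeasureTheory.eLpNorm_exponent_top] at hfin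
  filter_upwards [hb] with t ht
  have h2 := ENNReal.toReal_mono hfin.ne ht
  simpa [MeasureTheory.eLpNorm_exponent_top] using h2

open MeasureTheory in
lemma integrable_of_memLinfty {h : UC → ℂ} (hh : MeasureTheory.MemLp h ⊤ mUC) :
    Integrable h mUC :=
  MeasureTheory.memLp_one_iff_integrable.mp (hh.mono_exponent le_top)

open MeasureTheory in
/-- An `H^∞` function times an `H¹`-type function has vanishing negative Fourier
coefficients. -/
lemma fourierCoeff_mul_analytic {h u : UC → ℂ} (hh : MeasureTheory.MemLp h ⊤ mUC)
    (hhA : ∀ j : ℤ, j < 0 → fourierCoeff h j = 0)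
    (hu : Integrable u mUC) (huA : ∀ j : ℤ, j < 0 → fourierCoeff u j = 0)
    {m : ℤ} (hm : m < 0) : fourierCoeff (fun t => h t * u t) m = 0 := by
  set g : UC → ℂ := fun t => (fourier (-m) t : ℂ) * u t with hgdef
  have hgi : Integrable g mUC :=
    hu.bdd_mul (map_continuous (fourier (-m))).aestronglyMeasurable
      (Filter.Eventually.of_forall (cont_bound (map_continuous (fourier (-m)))).choose_spec)
  have hhi : Integrable h mUC := integrable_of_memLinfty hh
  have hrepr : fourierCoeff (fun t => h t * u t) m = ∫ t, h t * g t ∂mUC := by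
    unfold fourierCoeff
    congr 1
    funext t
    simp only [smul_eq_mul, hgdef]
    ring
  have hfg : ∀ j : ℤ, 0 ≤ j → (∫ t, (fourier j t : ℂ) * g t ∂mUC) = 0 := by
    intro j hj
    have hcalc : (∫ t, (fourier j t : ℂ) * g t ∂mUC) = fourierCoeff u (m - j) := by
      unfold fourierCoeff
      congr 1
      funext t
      have : (fourier (-(m - j)) t : ℂ) = (fourier j t : ℂ) * (fourier (-m) t : ℂ) := by
        rw [show -(m - j) = j + -m by ring, fourier_add]
      simp only [smul_eq_mul, this, hgdef]
      ring
    rw [hcalc]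
    exact huA _ (by omega)
  have hterm : ∀ q : ℤ, Integrable (fun t => ((fourier q t : ℂ) * g t) * fourierCoeff h q) mUC :=
    fun q => ((hgi.bdd_mul (map_continuous (fourier q)).aestronglyMeasurable
      (Filter.Eventually.of_forall (cont_bound (map_continuous (fourier q))).choose_spec)).mul_const _)
  have hsig0 : ∀ N : ℕ, (∫ t, sigma N h t * g t ∂mUC) = 0 := by
    intro N
    have hrw : ∀ t, sigma N h t * g t = (N : ℂ)⁻¹ * ∑ j ∈ Finset.range N,
        ∑ k ∈ Finset.range N,
          ((fourier ((k : ℤ) - j) t : ℂ) * g t) * fourierCoeff h ((k : ℤ) - j) := by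
      intro t
      rw [sigma_eq_sum N hhi t, mul_assoc]
      congr 1
      rw [Finset.sum_mul]
      refine Finset.sum_congr rfl fun j _ => ?_
      rw [Finset.sum_mul]
      exact Finset.sum_congr rfl fun k _ => by ring
    simp_rw [hrw]
    rw [MeasureTheory.integral_const_mul, MeasureTheory.integral_finset_sum _
      (fun j _ => MeasureTheory.integrable_finset_sum _ (fun k _ => hterm _))]
    have hz : ∀ j ∈ Finset.range N,
        (∫ t, ∑ k ∈ Finset.range N, ((fourier ((k : ℤ) - j) t : ℂ) * g t)
          * fourierCoeff h ((k : ℤ) - j) ∂mUC) = 0 := by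
      intro j _
      rw [MeasureTheory.integral_finset_sum _ (fun k _ => hterm _)]
      refine Finset.sum_eq_zero fun k _ => ?_
      rw [MeasureTheory.integral_mul_const]
      by_cases hq : 0 ≤ (k : ℤ) - j
      · rw [hfg _ hq, zero_mul]
      · rw [hhA _ (by omega), mul_zero]
    rw [Finset.sum_congr rfl hz]
    simp
  have hswap : ∀ N : ℕ, (∫ s, sigma N g s * h s ∂mUC) = 0 := fun N => by
    rw [← sigma_symm N hhi hgi]
    exact hsig0 N
  set M := (MeasureTheory.eLpNorm h ⊤ mUC).toReal with hMdef
  have hM := memLinfty_bound hh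
  have hint1 : Integrable (fun t => h t * g t) mUC :=
    hgi.bdd_mul hh.1 hM
  have hbound : ∀ N : ℕ, ‖∫ t, h t * g t ∂mUC‖
      ≤ M * ∫ t, ‖sigma N g t - g t‖ ∂mUC := by
    intro N
    have hint2 : Integrable (fun t => h t * sigma N g t) mUC :=
      (sigma_integrable N hgi).bdd_mul hh.1 hM
    have hint3 : Integrable (fun t => h t * (g t - sigma N g t)) mUC :=
      (hgi.sub (sigma_integrable N hgi)).bdd_mul hh.1 hM
    have hsplit : (∫ t, h t * g t ∂mUC) = ∫ t, h t * (g t - sigma N g t) ∂mUC := by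
      rw [show (fun t => h t * (g t - sigma N g t))
          = fun t => h t * g t - h t * sigma N g t from funext fun t => by ring]
      rw [MeasureTheory.integral_sub hint1 hint2]
      have hzz : (∫ t, h t * sigma N g t ∂mUC) = 0 := by
        rw [MeasureTheory.integral_congr_ae
          (Filter.Eventually.of_forall fun t => mul_comm (h t) (sigma N g t))]
        exact hswap N
      rw [hzz, sub_zero]
    rw [hsplit]
    calc ‖∫ t, h t * (g t - sigma N g t) ∂mUC‖
        ≤ ∫ t, ‖h t * (g t - sigma N g t)‖ ∂mUC :=
          MeasureTheory.norm_integral_le_integral_norm _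
      _ ≤ ∫ t, M * ‖sigma N g t - g t‖ ∂mUC := by
          refine MeasureTheory.integral_mono_ae hint3.norm
            ((((sigma_integrable N hgi).sub hgi).norm).const_mul M) ?_
          filter_upwards [hM] with t ht
          rw [norm_mul, norm_sub_rev (sigma N g t)]
          exact mul_le_mul_of_nonneg_right ht (norm_nonneg _)
      _ = M * ∫ t, ‖sigma N g t - g t‖ ∂mUC := MeasureTheory.integral_const_mul M _
  have htend : Filter.Tendsto (fun N => M * ∫ t, ‖sigma N g t - g t‖ ∂mUC)
      Filter.atTop (nhds 0) := by
    simpa using (tendsto_sigma_L1 hgi).const_mul M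
  have hle : ‖∫ t, h t * g t ∂mUC‖ ≤ 0 := ge_of_tendsto' htend hbound
  rw [hrepr]
  exact norm_le_zero_iff.mp hle
section EssNormFacts

variable {Y : Type*} [NormedAddCommGroup Y] [NormedSpace ℂ Y]

lemma isCompactOperator_zero' : IsCompactOperator (⇑(0 : Y →L[ℂ] Y)) := by
  have h : ⇑(0 : Y →L[ℂ] Y) = (0 : Y → Y) := rfl
  rw [h]
  exact isCompactOperator_zero

lemma essNormSet_nonempty (A : Y →L[ℂ] Y) :
    {c : ℝ | ∃ K : Y →L[ℂ] Y, IsCompactOperator K ∧ c = ‖A - K‖}.Nonempty :=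
  ⟨‖A - 0‖, 0, isCompactOperator_zero', rfl⟩

lemma essNormSet_bddBelow (A : Y →L[ℂ] Y) :
    BddBelow {c : ℝ | ∃ K : Y →L[ℂ] Y, IsCompactOperator K ∧ c = ‖A - K‖} :=
  ⟨0, fun c ⟨_, _, hc⟩ => hc ▸ norm_nonneg _⟩

lemma essNorm_nonneg (A : Y →L[ℂ] Y) : 0 ≤ essNorm A :=
  le_csInf (essNormSet_nonempty A) fun c ⟨_, _, hc⟩ => hc ▸ norm_nonneg _

lemma essNorm_le_of_compact (A K : Y →L[ℂ] Y) (hK : IsCompactOperator K) :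
    essNorm A ≤ ‖A - K‖ :=
  csInf_le (essNormSet_bddBelow A) ⟨K, hK, rfl⟩

lemma essNorm_le_norm (A : Y →L[ℂ] Y) : essNorm A ≤ ‖A‖ := by
  simpa using essNorm_le_of_compact A 0 isCompactOperator_zero'

lemma essNorm_mul_le (A B : Y →L[ℂ] Y) : essNorm (A * B) ≤ essNorm A * essNorm B := by
  have key : ∀ K L : Y →L[ℂ] Y, IsCompactOperator K → IsCompactOperator L →
      essNorm (A * B) ≤ ‖A - K‖ * ‖B - L‖ := by
    intro K L hK hL
    have h1 : IsCompactOperator ⇑(A.comp L) := by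
      have h : ⇑(A.comp L) = ⇑A ∘ ⇑L := rfl
      rw [h]
      exact hL.clm_comp A
    have h2 : IsCompactOperator ⇑(K.comp B) := by
      have h : ⇑(K.comp B) = ⇑K ∘ ⇑B := rfl
      rw [h]
      exact hK.comp_clm B
    have h3 : IsCompactOperator ⇑(K.comp L) := by
      have h : ⇑(K.comp L) = ⇑K ∘ ⇑L := rfl
      rw [h]
      exact hK.comp_clm L
    have hC : IsCompactOperator ⇑(A.comp L + K.comp B - K.comp L) := by
      have h : ⇑(A.comp L + K.comp B - K.comp L)
          = (⇑(A.comp L) + ⇑(K.comp B)) - ⇑(K.comp L) := rfl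
      rw [h]
      exact (h1.add h2).sub h3
    have hfact : A * B - (A.comp L + K.comp B - K.comp L) = (A - K).comp (B - L) := by
      ext x
      simp only [ContinuousLinearMap.sub_apply, ContinuousLinearMap.add_apply,
        ContinuousLinearMap.comp_apply, ContinuousLinearMap.mul_apply, map_sub]
      abel
    calc essNorm (A * B) ≤ ‖A * B - (A.comp L + K.comp B - K.comp L)‖ :=
          essNorm_le_of_compact _ _ hC
      _ = ‖(A - K).comp (B - L)‖ := by rw [hfact]
      _ ≤ ‖A - K‖ * ‖B - L‖ := ContinuousLinearMap.opNorm_comp_le _ _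
  have htendsto : Filter.Tendsto
      (fun k : ℕ => (essNorm A + 1 / (k + 1)) * (essNorm B + 1 / (k + 1)))
      Filter.atTop (nhds (essNorm A * essNorm B)) := by
    have h0 : Filter.Tendsto (fun k : ℕ => 1 / ((k : ℝ) + 1)) Filter.atTop (nhds 0) :=
      tendsto_one_div_add_atTop_nhds_zero_nat
    have h1 : Filter.Tendsto (fun k : ℕ => essNorm A + 1 / ((k : ℝ) + 1))
        Filter.atTop (nhds (essNorm A + 0)) := tendsto_const_nhds.add h0
    have h2 : Filter.Tendsto (fun k : ℕ => essNorm B + 1 / ((k : ℝ) + 1))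
        Filter.atTop (nhds (essNorm B + 0)) := tendsto_const_nhds.add h0
    have := h1.mul h2
    simpa using this
  refine ge_of_tendsto' htendsto fun k => ?_
  have hpos : (0 : ℝ) < 1 / ((k : ℝ) + 1) := by positivity
  have hA : sInf {c : ℝ | ∃ K : Y →L[ℂ] Y, IsCompactOperator K ∧ c = ‖A - K‖}
      < essNorm A + 1 / ((k : ℝ) + 1) := by
    have : essNorm A < essNorm A + 1 / ((k : ℝ) + 1) := lt_add_of_pos_right _ hpos
    exact this
  have hB : sInf {c : ℝ | ∃ K : Y →L[ℂ] Y, IsCompactOperator K ∧ c = ‖B - K‖}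
      < essNorm B + 1 / ((k : ℝ) + 1) := by
    have : essNorm B < essNorm B + 1 / ((k : ℝ) + 1) := lt_add_of_pos_right _ hpos
    exact this
  obtain ⟨a, ⟨K, hKc, rfl⟩, haa⟩ :=
    (csInf_lt_iff (essNormSet_bddBelow A) (essNormSet_nonempty A)).mp hA
  obtain ⟨b, ⟨L, hLc, rfl⟩, hbb⟩ :=
    (csInf_lt_iff (essNormSet_bddBelow B) (essNormSet_nonempty B)).mp hB
  calc essNorm (A * B) ≤ ‖A - K‖ * ‖B - L‖ := key K L hKc hLc
    _ ≤ (essNorm A + 1 / ((k : ℝ) + 1)) * (essNorm B + 1 / ((k : ℝ) + 1)) := by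
        refine mul_le_mul haa.le hbb.le (norm_nonneg _) ?_
        have := essNorm_nonneg A
        linarith

lemma essNorm_pow_le_one (A : Y →L[ℂ] Y) (h1 : essNorm A = 1) :
    ∀ k : ℕ, 1 ≤ k → essNorm (A ^ k) ≤ 1 := by
  intro k hk
  induction k, hk using Nat.le_induction with
  | base => simpa [pow_one] using le_of_eq h1
  | succ j hj ih =>
    rw [pow_succ]
    calc essNorm (A ^ j * A) ≤ essNorm (A ^ j) * essNorm A := essNorm_mul_le _ _
      _ ≤ 1 * 1 := mul_le_mul ih (le_of_eq h1) (essNorm_nonneg _) zero_le_one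
      _ = 1 := one_mul 1

end EssNormFacts
open MeasureTheory in
lemma exists_mult_op (E : BFS) {h : UC → ℂ} (hmem : MeasureTheory.MemLp h ⊤ mUC)
    (hA : ∀ j : ℤ, j < 0 → fourierCoeff h j = 0) :
    ∃ Mh : E.Hardy →L[ℂ] E.Hardy, ‖Mh‖ ≤ (MeasureTheory.eLpNorm h ⊤ mUC).toReal ∧
      ∀ f : E.Hardy, ∀ mm : ℤ,
        E.fc mm ((Mh f : E.Hardy) : E.X)
          = fourierCoeff (fun t => h t * (E.toAE (f : E.X) : UC → ℂ) t) mm := by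
  classical
  set M := (MeasureTheory.eLpNorm h ⊤ mUC).toReal with hMdef
  have hM0 : 0 ≤ M := ENNReal.toReal_nonneg
  have hMae : ∀ᵐ t ∂mUC, ‖h t‖ ≤ M := memLinfty_bound hmem
  have hmeas : ∀ x : E.X, AEStronglyMeasurable (fun t => h t * (E.toAE x : UC → ℂ) t) mUC :=
    fun x => hmem.1.mul (E.toAE x).aestronglyMeasurable
  let prodAE : E.X → (UC →ₘ[mUC] ℂ) :=
    fun x => AEEqFun.mk (fun t => h t * (E.toAE x : UC → ℂ) t) (hmeas x)
  have hcoe : ∀ x : E.X, (prodAE x : UC → ℂ)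
      =ᵐ[mUC] fun t => h t * (E.toAE x : UC → ℂ) t :=
    fun x => AEEqFun.coeFn_mk _ _
  have hbd : ∀ x : E.X, ∀ᵐ t ∂mUC,
      ‖(prodAE x : UC → ℂ) t‖ ≤ ‖(E.toAE ((M : ℂ) • x) : UC → ℂ) t‖ := by
    intro x
    have h2 : (E.toAE ((M : ℂ) • x) : UC → ℂ) =ᵐ[mUC]
        fun t => (M : ℂ) * (E.toAE x : UC → ℂ) t := by
      rw [_root_.map_smul]
      exact (AEEqFun.coeFn_smul _ _).trans (Filter.Eventually.of_forall fun t => rfl)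
    filter_upwards [hcoe x, h2, hMae] with t ht1 ht2 ht3
    rw [ht1, ht2, norm_mul, norm_mul, Complex.norm_real, Real.norm_eq_abs,
      _root_.abs_of_nonneg hM0]
    exact mul_le_mul_of_nonneg_right ht3 (norm_nonneg _)
  have hlat : ∀ x : E.X, ∃ y : E.X, E.toAE y = prodAE x ∧ ‖y‖ ≤ ‖(M : ℂ) • x‖ :=
    fun x => E.lattice ((M : ℂ) • x) (prodAE x) (hbd x)
  let Mh0 : E.X → E.X := fun x => (hlat x).choose
  have hMh0a : ∀ x, E.toAE (Mh0 x) = prodAE x := fun x => (hlat x).choose_spec.1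
  have hMh0n : ∀ x, ‖Mh0 x‖ ≤ M * ‖x‖ := by
    intro x
    refine ((hlat x).choose_spec.2).trans ?_
    rw [norm_smul, Complex.norm_real, Real.norm_eq_abs, _root_.abs_of_nonneg hM0]
  have hfc : ∀ x : E.X, ∀ mm : ℤ, E.fc mm (Mh0 x)
      = fourierCoeff (fun t => h t * (E.toAE x : UC → ℂ) t) mm := by
    intro x mm
    show fourierCoeff (E.toAE (Mh0 x) : UC → ℂ) mm = _
    rw [hMh0a]
    exact fourierCoeff_congr_ae' (hcoe x) mm
  have hadd : ∀ x y : E.X, Mh0 (x + y) = Mh0 x + Mh0 y := by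
    intro x y
    apply E.inj
    rw [map_add, hMh0a, hMh0a, hMh0a]
    apply MeasureTheory.AEEqFun.ext
    have h1 : ((prodAE x + prodAE y : UC →ₘ[mUC] ℂ) : UC → ℂ)
        =ᵐ[mUC] fun t => (prodAE x : UC → ℂ) t + (prodAE y : UC → ℂ) t :=
      AEEqFun.coeFn_add _ _
    have h2 : (E.toAE (x + y) : UC → ℂ) =ᵐ[mUC]
        fun t => (E.toAE x : UC → ℂ) t + (E.toAE y : UC → ℂ) t := by
      rw [map_add]
      exact AEEqFun.coeFn_add _ _
    filter_upwards [hcoe (x + y), h1, h2, hcoe x, hcoe y] with t ha hb hc hd he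
    rw [ha, hb, hc, hd, he]
    ring
  have hsmul : ∀ (c : ℂ) (x : E.X), Mh0 (c • x) = c • Mh0 x := by
    intro c x
    apply E.inj
    rw [_root_.map_smul, hMh0a, hMh0a]
    apply MeasureTheory.AEEqFun.ext
    have h1 : ((c • prodAE x : UC →ₘ[mUC] ℂ) : UC → ℂ)
        =ᵐ[mUC] fun t => c * (prodAE x : UC → ℂ) t :=
      (AEEqFun.coeFn_smul _ _).trans (Filter.Eventually.of_forall fun t => rfl)
    have h2 : (E.toAE (c • x) : UC → ℂ) =ᵐ[mUC]
        fun t => c * (E.toAE x : UC → ℂ) t := by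
      rw [_root_.map_smul]
      exact (AEEqFun.coeFn_smul _ _).trans (Filter.Eventually.of_forall fun t => rfl)
    filter_upwards [hcoe (c • x), h1, h2, hcoe x] with t ha hb hc hd
    rw [ha, hb, hc, hd]
    ring
  let MhL : E.X →ₗ[ℂ] E.X :=
    { toFun := Mh0, map_add' := hadd, map_smul' := hsmul }
  have hHardy : ∀ x ∈ E.Hardy, MhL x ∈ E.Hardy := by
    intro x hx mm hmm
    show E.fc mm (Mh0 x) = 0
    rw [hfc]
    exact fourierCoeff_mul_analytic hmem hA (E.integrable x) (fun j hj => hx j hj) hmm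
  let MhH : E.Hardy →ₗ[ℂ] E.Hardy := MhL.restrict hHardy
  refine ⟨LinearMap.mkContinuous MhH M (fun f => ?_), ?_, ?_⟩
  · exact hMh0n (f : E.X)
  · exact LinearMap.mkContinuous_norm_le _ hM0 _
  · intro f mm
    exact hfc (f : E.X) mm

/-- if `‖T(e_{-1})‖_e = 1` on `H[X]`, then `‖T(e_{-n}h)‖_e ≤ ‖e_{-n}h‖_{L^∞}`
for every `n ≥ 1` and `h ∈ H^∞`. -/
theorem stmt9 (E : BFS) (T1 : E.Hardy →L[ℂ] E.Hardy)
    (hT1 : IsToeplitz E (fun t => fourier (-1 : ℤ) t) T1)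
    (hess : essNorm T1 = 1) :
    ∀ n : ℕ, 1 ≤ n → ∀ h : UC → ℂ, MeasureTheory.MemLp h ⊤ mUC →
      (∀ j : ℤ, j < 0 → fourierCoeff h j = 0) →
      ∀ Ta : E.Hardy →L[ℂ] E.Hardy,
        IsToeplitz E (fun t => fourier (-(n : ℤ)) t * h t) Ta →
        essNorm Ta ≤
          (MeasureTheory.eLpNorm (fun t => fourier (-(n : ℤ)) t * h t) ⊤ mUC).toReal := by
  intro n hn h hmem hA Ta hTa
  obtain ⟨Mh, hMnorm, hMfc⟩ := exists_mult_op E hmem hA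
  have hMeq : MeasureTheory.eLpNorm h ⊤ mUC
      = MeasureTheory.eLpNorm (fun t => (fourier (-(n : ℤ)) t : ℂ) * h t) ⊤ mUC := by
    refine (MeasureTheory.eLpNorm_congr_norm_ae ?_).symm
    exact Filter.Eventually.of_forall fun t => by
      rw [norm_mul, norm_fourier_eq_one, one_mul]
  have hfcpow : ∀ (k : ℕ) (g : E.Hardy) (mm : ℤ), 0 ≤ mm →
      E.fc mm ((T1 ^ k) g : E.X)
        = fourierCoeff (E.toAE (g : E.X) : UC → ℂ) (mm + k) := by
    intro k
    induction k with
    | zero =>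
      intro g mm _
      simp only [pow_zero, ContinuousLinearMap.one_apply, Nat.cast_zero, add_zero]
      rfl
    | succ k ih =>
      intro g mm hmm
      have hstep : (T1 ^ (k + 1)) g = T1 ((T1 ^ k) g) := by
        rw [pow_succ']
        rfl
      rw [hstep]
      refine (hT1 ((T1 ^ k) g) mm hmm).trans ?_
      simp only []
      rw [fourierCoeff_fourier_mul, show mm - (-1 : ℤ) = mm + 1 by ring]
      have ih' : fourierCoeff (E.toAE (((T1 ^ k) g : E.Hardy) : E.X) : UC → ℂ) (mm + 1)
          = fourierCoeff (E.toAE (g : E.X) : UC → ℂ) ((mm + 1) + k) := ih g (mm + 1) (by omega)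
      rw [ih']
      congr 1
      push_cast
      ring
  have key : ∀ f : E.Hardy, Ta f = (T1 ^ n) (Mh f) := by
    intro f
    have hall : ∀ mm : ℤ,
        fourierCoeff (E.toAE ((Ta f : E.X) - ((T1 ^ n) (Mh f) : E.X)) : UC → ℂ) mm = 0 := by
      intro mm
      show E.fc mm ((Ta f : E.X) - ((T1 ^ n) (Mh f) : E.X)) = 0
      rw [map_sub]
      by_cases hmm : 0 ≤ mm
      · have lhs_eq : E.fc mm (Ta f : E.X)
            = fourierCoeff (fun t => h t * (E.toAE (f : E.X) : UC → ℂ) t) (mm + n) := by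
          refine (hTa f mm hmm).trans ?_
          simp only []
          rw [show (fun t => (fourier (-(n : ℤ)) t : ℂ) * h t
              * (E.toAE (f : E.X) : UC → ℂ) t)
              = fun t => (fourier (-(n : ℤ)) t : ℂ)
                * (h t * (E.toAE (f : E.X) : UC → ℂ) t)
            from funext fun t => mul_assoc _ _ _]
          rw [fourierCoeff_fourier_mul]
          congr 1
          ring
        have rhs_eq : E.fc mm ((T1 ^ n) (Mh f) : E.X)
            = fourierCoeff (fun t => h t * (E.toAE (f : E.X) : UC → ℂ) t) (mm + n) := by
          refine (hfcpow n (Mh f) mm hmm).trans ?_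
          exact hMfc f (mm + n)
        rw [lhs_eq, rhs_eq, sub_self]
      · rw [(Ta f).2 mm (by omega), ((T1 ^ n) (Mh f)).2 mm (by omega), sub_zero]
    have hae := ae_zero_of_fourierCoeff_zero (E.integrable _) hall
    have hz : E.toAE ((Ta f : E.X) - ((T1 ^ n) (Mh f) : E.X)) = 0 :=
      MeasureTheory.AEEqFun.ext (hae.trans (MeasureTheory.AEEqFun.coeFn_zero).symm)
    have hd0 : (Ta f : E.X) - ((T1 ^ n) (Mh f) : E.X) = 0 :=
      E.inj (by rw [map_zero]; exact hz)
    exact Subtype.ext (by rwa [sub_eq_zero] at hd0)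
  have hTaEq : Ta = (T1 ^ n) * Mh := ContinuousLinearMap.ext fun f => by
    rw [ContinuousLinearMap.mul_apply]
    exact key f
  calc essNorm Ta = essNorm ((T1 ^ n) * Mh) := by rw [hTaEq]
    _ ≤ essNorm (T1 ^ n) * essNorm Mh := essNorm_mul_le _ _
    _ ≤ 1 * essNorm Mh :=
        mul_le_mul_of_nonneg_right (essNorm_pow_le_one T1 hess n hn) (essNorm_nonneg _)
    _ = essNorm Mh := one_mul _
    _ ≤ ‖Mh‖ := essNorm_le_norm Mh
    _ ≤ (MeasureTheory.eLpNorm h ⊤ mUC).toReal := hMnorm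
    _ = _ := by rw [hMeq]
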